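/- Let X be a natural number and let J ⊆ (−1, 1) be an open interval containing sin X. Then for every natural number b there exists a natural number d with d > b such that for all natural numbers Y, if X is the best approximate of Y up to d (Y|_d = X), then sin Y ∈ J. -/

import Mathlib

open Set

/-- `BestApp X d Y` says that `Y` is the best approximate of `X` up to `d`
(written `X|_d = Y`): `Y ≤ d`, `sin Y ≤ sin X`, and for every `Z ≤ d` with
`Z ≠ Y` and `sin Z ≤ sin X` one has `sin Z < sin Y`. -/
def BestApp (X d Y : ℕ) : Prop :=
  Y ≤ d ∧ Real.sin Y ≤ Real.sin X ∧
    ∀ Z : ℕ, Z ≤ d → Z ≠ Y → Real.sin Z ≤ Real.sin X → Real.sin Z < Real.sin Y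

/-- The subgroup of `ℝ` generated by `1` and `2π` is dense. -/
lemma dense_zmult_one_sup_two_pi :
    Dense ((AddSubgroup.zmultiples (1 : ℝ) ⊔ AddSubgroup.zmultiples (2 * Real.pi) :
      AddSubgroup ℝ) : Set ℝ) := by
  set S := AddSubgroup.zmultiples (1 : ℝ) ⊔ AddSubgroup.zmultiples (2 * Real.pi) with hS
  rcases AddSubgroup.dense_or_cyclic S with h | ⟨a, ha⟩
  · exact h
  · exfalso
    have h1 : (1 : ℝ) ∈ S :=
      AddSubgroup.mem_sup_left (AddSubgroup.mem_zmultiples _)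
    have h2 : (2 * Real.pi) ∈ S :=
      AddSubgroup.mem_sup_right (AddSubgroup.mem_zmultiples _)
    rw [ha, ← AddSubgroup.zmultiples_eq_closure, AddSubgroup.mem_zmultiples_iff] at h1 h2
    obtain ⟨m, hm⟩ := h1
    obtain ⟨k, hk⟩ := h2
    rw [zsmul_eq_mul] at hm hk
    have hm0 : (m : ℝ) ≠ 0 := fun h0 => by rw [h0, zero_mul] at hm; exact one_ne_zero hm.symm
    have ha1 : a = (m : ℝ)⁻¹ := by field_simp; linarith
    have hrat : (2 * Real.pi) = ((k / m : ℚ) : ℝ) := by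
      rw [ha1] at hk
      push_cast
      rw [← hk, div_eq_mul_inv]
    have hirr : Irrational (2 * Real.pi) := by
      simpa using irrational_pi.natCast_mul (m := 2) (by norm_num)
    exact hirr ⟨_, hrat.symm⟩

/-- Natural numbers hit every sine-preimage of a nonempty open set. -/
lemma exists_nat_sin_mem {a c : ℝ} (θ : ℝ) (hθ : Real.sin θ ∈ Set.Ioo a c) :
    ∃ n : ℕ, Real.sin n ∈ Set.Ioo a c := by
  haveI : Fact (0 < 2 * Real.pi) := ⟨by positivity⟩
  set p : ℝ → AddCircle (2 * Real.pi) := fun x => (x : AddCircle (2 * Real.pi)) with hp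
  have hpc : Continuous p := continuous_quotient_mk'
  have hps : Function.Surjective p := Quotient.exists_rep
  have hadd : ∀ x y : ℝ, p (x + y) = p x + p y := fun x y => rfl
  have hzsmul : ∀ (n : ℤ) (x : ℝ), p (n • x) = n • p x := fun n x => by
    induction n using Int.induction_on with
    | zero => simp [hp]
    | succ i ih => rw [add_smul, add_smul, one_smul, one_smul, hadd, ih]
    | pred i ih =>
        rw [sub_smul, sub_smul, one_smul, one_smul, sub_eq_add_neg, sub_eq_add_neg, hadd, ih]
        congr 1
  -- density of the ℤ-orbit of `p 1`
  have hdz : DenseRange (fun n : ℤ => n • p 1) := by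
    have hdense : Dense (p '' ((AddSubgroup.zmultiples (1 : ℝ) ⊔
        AddSubgroup.zmultiples (2 * Real.pi) : AddSubgroup ℝ) : Set ℝ)) :=
      hps.denseRange.dense_image hpc dense_zmult_one_sup_two_pi
    have hsub : p '' ((AddSubgroup.zmultiples (1 : ℝ) ⊔
        AddSubgroup.zmultiples (2 * Real.pi) : AddSubgroup ℝ) : Set ℝ) ⊆
        Set.range (fun n : ℤ => n • p 1) := by
      rintro q ⟨x, hx, rfl⟩
      rw [SetLike.mem_coe, AddSubgroup.mem_sup] at hx
      obtain ⟨y, hy, z, hz, rfl⟩ := hx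
      obtain ⟨n, rfl⟩ := AddSubgroup.mem_zmultiples_iff.mp hy
      have hz0 : p z = 0 := (QuotientAddGroup.eq_zero_iff z).mpr hz
      exact ⟨n, by rw [hadd, hz0, add_zero, hzsmul]⟩
    exact hdense.mono hsub
  -- hence density of the ℕ-orbit
  have hdn : DenseRange (fun n : ℕ => n • p 1) := denseRange_zsmul_iff_nsmul.mp hdz
  -- the open set of points whose sine lies in `(a, c)`
  set U : Set ℝ := Real.sin ⁻¹' Set.Ioo a c with hU
  have hUopen : IsOpen U := isOpen_Ioo.preimage Real.continuous_sin
  have hpU : IsOpen (p '' U) := QuotientAddGroup.isOpenMap_coe U hUopen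
  have hpUne : (p '' U).Nonempty := ⟨p θ, θ, hθ, rfl⟩
  obtain ⟨n, hn⟩ := hdn.exists_mem_open hpU hpUne
  obtain ⟨y, hyU, hy⟩ := hn
  -- `n • p 1 = p n`
  have hpn : p (n : ℝ) = n • p 1 := by
    have := hzsmul (n : ℤ) 1
    simpa [natCast_zsmul] using this
  have heq : p y = p (n : ℝ) := by rw [hpn, hy]
  have hmem : y - (n : ℝ) ∈ AddSubgroup.zmultiples (2 * Real.pi) :=
    QuotientAddGroup.eq_iff_sub_mem.mp heq
  obtain ⟨k, hk⟩ := AddSubgroup.mem_zmultiples_iff.mp hmem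
  refine ⟨n, ?_⟩
  have : Real.sin (n : ℝ) = Real.sin y := by
    have hy' : y = (n : ℝ) + (k : ℝ) * (2 * Real.pi) := by
      rw [zsmul_eq_mul] at hk
      linarith
    rw [hy', Real.sin_add_int_mul_two_pi]
  rw [this]
  exact hyU

theorem exists_large_degree_bestApp (X : ℕ) (u v : ℝ)
    (hJ : Set.Ioo u v ⊆ Set.Ioo (-1) 1) (hX : Real.sin X ∈ Set.Ioo u v) :
    ∀ b : ℕ, ∃ d : ℕ, d > b ∧
      ∀ Y : ℕ, BestApp Y d X → Real.sin Y ∈ Set.Ioo u v := by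
  intro b
  have hu := hX.1
  have hv := hX.2
  have h1 := (hJ hX).1
  have h2 := (hJ hX).2
  -- pick a target value strictly between `sin X` and `min v 1`
  set t : ℝ := (Real.sin X + min v 1) / 2 with ht
  have hmv : Real.sin X < min v 1 := lt_min hv h2
  have htlow : Real.sin X < t := by simp only [ht]; linarith
  have hthigh : t < min v 1 := by simp only [ht]; linarith
  have ht1 : t < 1 := lt_of_lt_of_le hthigh (min_le_right _ _)
  have htm1 : -1 < t := lt_trans h1 htlow
  obtain ⟨Z, hZ⟩ := exists_nat_sin_mem (Real.arcsin t)
    (by rw [Real.sin_arcsin htm1.le ht1.le]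
        exact ⟨htlow, lt_of_lt_of_le hthigh (min_le_left _ _)⟩)
  refine ⟨max (b + 1) Z, lt_of_lt_of_le (Nat.lt_succ_self b) (le_max_left _ _), ?_⟩
  rintro Y ⟨hXd, hsXY, hmin⟩
  obtain ⟨hZlow, hZhigh⟩ := hZ
  constructor
  · exact lt_of_lt_of_le hu hsXY
  · by_contra hge
    push_neg at hge
    have hZne : Z ≠ X := by
      intro h
      rw [h] at hZlow
      exact lt_irrefl _ hZlow
    have hZd : Z ≤ max (b + 1) Z := le_max_right _ _
    have hZY : Real.sin Z ≤ Real.sin Y := le_trans hZhigh.le (le_trans hge le_rfl)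
    exact absurd (hmin Z hZd hZne hZY) (not_lt.mpr hZlow.le)
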